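/- Let V be a finite-dimensional rational vector space of dimension r, let C = {v ∈ V⊗ℝ : α₁(v)>0, …, α_r(v)>0} be a sharp rational open cone defined by linearly independent linear functionals α₁,…,α_r ∈ Hom(V,ℚ), and let Σ ⊂ V be a lattice (a finitely generated subgroup spanning V). Then there exist a finite subset E ⊂ Σ and elements a₁,…,a_r ∈ Σ such that every element of C ∩ Σ can be written uniquely as v₀ + ν₁a₁ + ⋯ + ν_r a_r with v₀ ∈ E and ν₁,…,ν_r ∈ ℕ₀. -/

import Mathlib

open Module

lemma aux_den_dvd_int (q : ℚ) {n : ℕ} (h : q.den ∣ n) : ∃ k : ℤ, (n : ℚ) * q = k := by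
  obtain ⟨t, ht⟩ := h
  refine ⟨q.num * t, ?_⟩
  have hden : (q.den : ℚ) * q = q.num := by
    rw [mul_comm]; exact_mod_cast Rat.mul_den_eq_num q
  subst ht
  push_cast
  rw [mul_comm (q.den : ℚ) (t : ℚ), mul_assoc, hden]
  ring


lemma aux_nu_spec {x N : ℚ} (hN : 0 < N) (hx : 0 < x) :
    ((⌈x / N⌉₊ - 1 : ℕ) : ℚ) * N < x ∧ x ≤ (((⌈x / N⌉₊ - 1 : ℕ) : ℚ) + 1) * N := by
  have hq : 0 < x / N := div_pos hx hN
  have hc : 1 ≤ ⌈x / N⌉₊ := Nat.one_le_ceil_iff.mpr hq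
  have hcast : ((⌈x / N⌉₊ - 1 : ℕ) : ℚ) = (⌈x / N⌉₊ : ℚ) - 1 := by
    push_cast [hc]; ring
  have h1 : (⌈x / N⌉₊ : ℚ) < x / N + 1 := Nat.ceil_lt_add_one hq.le
  have h2 : x / N ≤ (⌈x / N⌉₊ : ℚ) := Nat.le_ceil _
  have hxN : x / N * N = x := div_mul_cancel₀ x hN.ne'
  constructor
  · rw [hcast]; nlinarith
  · rw [hcast]; nlinarith

lemma aux_nu_unique {x N : ℚ} (hN : 0 < N) {μ : ℕ} (h1 : (μ : ℚ) * N < x)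
    (h2 : x ≤ ((μ : ℚ) + 1) * N) : μ = ⌈x / N⌉₊ - 1 := by
  have h : ⌈x / N⌉₊ = μ + 1 := by
    rw [Nat.ceil_eq_iff (Nat.succ_ne_zero μ)]
    constructor
    · simpa using (lt_div_iff₀ hN).mpr h1
    · rw [div_le_iff₀ hN]; push_cast; linarith
  omega


/-- Cone decomposition lemma: Let `V` be a `ℚ`-vector space of dimension `r`,
let `C = {v : ∀ i, 0 < αᵢ v}` be a sharp rational open cone given by linearly
independent functionals `α₁, …, α_r ∈ Hom(V, ℚ)`, and let `Sig ⊆ V` be a lattice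
(a finitely generated subgroup spanning `V`).  Then there are a finite set
`E ⊆ Sig` and elements `a₁, …, a_r ∈ Sig` such that `C ∩ Sig` is exactly the set
of elements of the form `v₀ + ν₁ a₁ + ⋯ + ν_r a_r` with `v₀ ∈ E` and
`ν_j ∈ ℕ`, and this representation is unique. -/
theorem stmt1 {V : Type*} [AddCommGroup V] [Module ℚ V] (r : ℕ)
    [FiniteDimensional ℚ V] (hr : Module.finrank ℚ V = r)
    (α : Fin r → (V →ₗ[ℚ] ℚ)) (hα : LinearIndependent ℚ α)
    (Sig : AddSubgroup V) (hfg : Sig.FG)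
    (hspan : Submodule.span ℚ (Sig : Set V) = ⊤) :
    ∃ (E : Finset V) (a : Fin r → V), (↑E : Set V) ⊆ (Sig : Set V) ∧
      (∀ j, a j ∈ Sig) ∧
      ∀ v : V, (v ∈ Sig ∧ ∀ i, 0 < α i v) ↔
        ∃! p : V × (Fin r → ℕ), p.1 ∈ E ∧ v = p.1 + ∑ j, p.2 j • a j := by
  classical
  -- the functionals span the dual space
  have hdr : finrank ℚ (V →ₗ[ℚ] ℚ) = r := by
    rw [Subspace.dual_finrank_eq, hr]
  have hspanα : Submodule.span ℚ (Set.range α) = ⊤ := by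
    apply Submodule.eq_top_of_finrank_eq
    rw [finrank_span_eq_card hα, hdr, Fintype.card_fin]
  -- the evaluation map is a linear equivalence
  set φ : V →ₗ[ℚ] (Fin r → ℚ) := LinearMap.pi α with hφ
  have hinj : Function.Injective φ := by
    rw [← LinearMap.ker_eq_bot, eq_bot_iff]
    intro v hv
    have hv0 : ∀ i, α i v = 0 := fun i => congrFun (LinearMap.mem_ker.mp hv) i
    have : ∀ f : Module.Dual ℚ V, f v = 0 := by
      intro f
      have hf : f ∈ Submodule.span ℚ (Set.range α) := hspanα ▸ Submodule.mem_top
      induction hf using Submodule.span_induction with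
      | mem x hx => obtain ⟨i, rfl⟩ := hx; exact hv0 i
      | zero => simp
      | add x y _ _ hx hy => simp [hx, hy]
      | smul c x _ hx => simp [hx]
    simpa using (Module.forall_dual_apply_eq_zero_iff ℚ v).mp this
  have hsurj : Function.Surjective φ := by
    refine (LinearMap.injective_iff_surjective_of_finrank_eq_finrank ?_).mp hinj
    rw [hr, Module.finrank_pi]; simp
  set φe : V ≃ₗ[ℚ] (Fin r → ℚ) := LinearEquiv.ofBijective φ ⟨hinj, hsurj⟩ with hφe
  set b : Fin r → V := fun j => φe.symm (Pi.single j 1) with hb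
  have hαb : ∀ i j, α i (b j) = if i = j then 1 else 0 := by
    intro i j
    have : φ (b j) = Pi.single j 1 := φe.apply_symm_apply _
    have := congrFun this i
    rw [hφ] at this
    simp only [LinearMap.pi_apply] at this
    rw [this, Pi.single_apply]
  -- scaling into the lattice
  have hscale : ∀ v : V, ∃ n : ℕ, 0 < n ∧ (n : ℚ) • v ∈ Sig := by
    intro v
    have hv : v ∈ Submodule.span ℚ (Sig : Set V) := hspan ▸ Submodule.mem_top
    rw [Submodule.mem_span_set] at hv
    obtain ⟨c, hsupp, hsum⟩ := hv
    refine ⟨∏ x ∈ c.support, (c x).den, Finset.prod_pos fun x _ => (c x).pos, ?_⟩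
    rw [← hsum, Finsupp.sum, Finset.smul_sum]
    apply AddSubgroup.sum_mem
    intro x hx
    obtain ⟨k, hk⟩ := aux_den_dvd_int (c x) (Finset.dvd_prod_of_mem (fun x => (c x).den) hx)
    rw [smul_smul, hk, Int.cast_smul_eq_zsmul]
    exact AddSubgroup.zsmul_mem _ (hsupp hx) k
  -- denominator bound on the lattice
  obtain ⟨S, hS⟩ := hfg
  set m : ℕ := ∏ s ∈ S, ∏ j, (α j s).den with hm
  have hmpos : 0 < m :=
    Finset.prod_pos fun s _ => Finset.prod_pos fun j _ => (α j s).pos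
  have hden : ∀ x ∈ Sig, ∀ j, ∃ k : ℤ, (m : ℚ) * α j x = k := by
    intro x hx
    rw [← hS] at hx
    induction hx using AddSubgroup.closure_induction with
    | mem s hs =>
      intro j
      refine aux_den_dvd_int _ (dvd_trans ?_ (Finset.dvd_prod_of_mem _ hs))
      exact Finset.dvd_prod_of_mem _ (Finset.mem_univ j)
    | zero => intro j; exact ⟨0, by simp⟩
    | add x y hx hy ihx ihy =>
      intro j
      obtain ⟨k1, hk1⟩ := ihx j
      obtain ⟨k2, hk2⟩ := ihy j
      exact ⟨k1 + k2, by push_cast; rw [map_add, mul_add, hk1, hk2]⟩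
    | neg x hx ihx =>
      intro j
      obtain ⟨k, hk⟩ := ihx j
      exact ⟨-k, by push_cast; rw [map_neg, mul_neg, hk]⟩
  -- choose generators `a j` in the lattice
  choose n hn ha using fun j => hscale (b j)
  set a : Fin r → V := fun j => (n j : ℚ) • b j with haa
  have hαa : ∀ i j, α i (a j) = if i = j then (n j : ℚ) else 0 := by
    intro i j
    rw [haa]
    simp only [map_smul, smul_eq_mul, hαb]
    split <;> simp
  have keyval : ∀ (w : V) (μ : Fin r → ℕ) (i : Fin r),
      α i (w + ∑ j, μ j • a j) = α i w + (μ i : ℚ) * (n i : ℚ) := by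
    intro w μ i
    rw [map_add, map_sum]
    congr 1
    have hterm : ∀ j, α i (μ j • a j) = if i = j then (μ j : ℚ) * (n j : ℚ) else 0 := by
      intro j
      rw [map_nsmul, hαa]
      split <;> simp [nsmul_eq_mul]
    rw [Finset.sum_congr rfl fun j _ => hterm j]
    simp
  -- the finite fundamental domain
  set Eset : Set V := {x | x ∈ Sig ∧ ∀ j, 0 < α j x ∧ α j x ≤ (n j : ℚ)} with hEset
  have hfin : Eset.Finite := by
    set f : V → (Fin r → ℤ) := fun x j => ⌈(m : ℚ) * α j x⌉ with hf
    have hinjOn : Set.InjOn f Eset := by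
      intro x hx y hy hxy
      apply hinj
      funext i
      simp only [hφ, LinearMap.pi_apply]
      obtain ⟨kx, hkx⟩ := hden x hx.1 i
      obtain ⟨ky, hky⟩ := hden y hy.1 i
      have h1 : (kx : ℚ) = ky := by
        have h2 := congrFun hxy i
        rw [hf] at h2
        simp only at h2
        rw [hkx, hky, Int.ceil_intCast, Int.ceil_intCast] at h2
        exact_mod_cast h2
      have h3 : (m : ℚ) * α i x = (m : ℚ) * α i y := by rw [hkx, hky, h1]
      have hm0 : (m : ℚ) ≠ 0 := Nat.cast_ne_zero.mpr hmpos.ne'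
      exact mul_left_cancel₀ hm0 h3
    have himg : f '' Eset ⊆
        Set.pi Set.univ (fun j => Set.Icc 1 ⌈(m : ℚ) * (n j : ℚ)⌉) := by
      rintro _ ⟨x, hx, rfl⟩ j _
      have hmQ : (0 : ℚ) < (m : ℚ) := by exact_mod_cast hmpos
      constructor
      · exact Int.one_le_ceil_iff.mpr (mul_pos hmQ (hx.2 j).1)
      · exact Int.ceil_le_ceil (mul_le_mul_of_nonneg_left (hx.2 j).2 hmQ.le)
    exact Set.Finite.of_finite_image
      ((Set.Finite.pi fun j => Set.finite_Icc _ _).subset himg) hinjOn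
  -- conclusion
  refine ⟨hfin.toFinset, a, ?_, ha, ?_⟩
  · intro x hx
    rw [Finset.mem_coe, Set.Finite.mem_toFinset] at hx
    exact hx.1
  · intro v
    constructor
    · rintro ⟨hvS, hvpos⟩
      obtain ⟨ν, hν⟩ : ∃ ν : Fin r → ℕ, ∀ j,
          (ν j : ℚ) * (n j : ℚ) < α j v ∧ α j v ≤ ((ν j : ℚ) + 1) * (n j : ℚ) ∧
          ∀ μ : ℕ, (μ : ℚ) * (n j : ℚ) < α j v →
            α j v ≤ ((μ : ℚ) + 1) * (n j : ℚ) → μ = ν j := by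
        refine ⟨fun j => ⌈α j v / (n j : ℚ)⌉₊ - 1, fun j => ?_⟩
        have hNpos : (0 : ℚ) < (n j : ℚ) := by exact_mod_cast hn j
        obtain ⟨h1, h2⟩ := aux_nu_spec hNpos (hvpos j)
        exact ⟨h1, h2, fun μ hu1 hu2 => aux_nu_unique hNpos hu1 hu2⟩
      set v₀ : V := v - ∑ j, ν j • a j with hv₀
      have hsum_mem : ∑ j, ν j • a j ∈ Sig :=
        AddSubgroup.sum_mem _ fun j _ => AddSubgroup.nsmul_mem _ (ha j) _
      have hrepr : v = v₀ + ∑ j, ν j • a j := by rw [hv₀]; abel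
      have hval : ∀ (w : V) (μ : Fin r → ℕ), v = w + ∑ j, μ j • a j →
          ∀ j, α j v = α j w + (μ j : ℚ) * (n j : ℚ) := by
        intro w μ h j
        rw [h]
        exact keyval w μ j
      have hv0val := hval v₀ ν hrepr
      have hv0mem : v₀ ∈ Eset := by
        refine ⟨AddSubgroup.sub_mem _ hvS hsum_mem, fun j => ?_⟩
        constructor
        · have h1 := (hν j).1
          have h2 := hv0val j
          linarith
        · have h1 := (hν j).2.1
          have h2 := hv0val j
          linarith
      refine ⟨(v₀, ν), ⟨(Set.Finite.mem_toFinset hfin).mpr hv0mem, hrepr⟩, ?_⟩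
      rintro ⟨w, μ⟩ ⟨hw, hreprw⟩
      rw [Set.Finite.mem_toFinset] at hw
      have hwval := hval w μ hreprw
      have hμν : μ = ν := by
        funext j
        refine (hν j).2.2 (μ j) ?_ ?_
        · have h1 := (hw.2 j).1
          have h2 := hwval j
          linarith
        · have h1 := (hw.2 j).2
          have h2 := hwval j
          linarith
      subst hμν
      have hwv : w = v₀ := by
        have h := hreprw.symm.trans hrepr
        exact add_right_cancel h
      exact Prod.ext hwv rfl
    · rintro ⟨⟨w, μ⟩, ⟨hw, hrepr⟩, -⟩
      rw [Set.Finite.mem_toFinset] at hw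
      constructor
      · rw [hrepr]
        exact AddSubgroup.add_mem _ hw.1
          (AddSubgroup.sum_mem _ fun j _ => AddSubgroup.nsmul_mem _ (ha j) _)
      · intro i
        rw [hrepr, keyval w μ i]
        have h1 := (hw.2 i).1
        have h2 : (0 : ℚ) ≤ (μ i : ℚ) * (n i : ℚ) := by positivity
        linarith
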